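/- arXiv:1812.00492 — 3 statements merged into one kernel-verified Lean document; each statement's English description precedes it below -/
import Mathlib

section
/- Let X, U, ε be mutually independent real random variables, with U and ε symmetric about 0 having strictly positive characteristic functions. Let W = X + U and Y = β₀ + β₁X + ε for real constants β₀, β₁. Then for all t with φ_X(β₁ t) ≠ 0, the phase functions satisfy ρ_Y(t) = exp(itβ₀)·ρ_X(β₁ t) = exp(itβ₀)·ρ_W(β₁ t). -/
open MeasureTheory ProbabilityTheory Complex

/-- The characteristic function of a real random variable `X` on `(Ω, μ)`. -/
noncomputable def charFn {Ω : Type*} [MeasurableSpace Ω] (μ : Measure Ω) (X : Ω → ℝ) (t : ℝ) : ℂ :=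
  ∫ ω, Complex.exp (t * X ω * Complex.I) ∂μ

/-- The phase function of a real random variable. -/
noncomputable def phaseFn {Ω : Type*} [MeasurableSpace Ω] (μ : Measure Ω) (X : Ω → ℝ) (t : ℝ) : ℂ :=
  charFn μ X t / (‖charFn μ X t‖ : ℂ)

lemma indep_integral_exp {Ω : Type*} [MeasurableSpace Ω] (μ : Measure Ω)
    [IsProbabilityMeasure μ] (f g : Ω → ℝ) (hf : AEMeasurable f μ) (hg : AEMeasurable g μ)
    (h : IndepFun f g μ) (s u : ℝ) :
    ∫ ω, Complex.exp (s * f ω * Complex.I) * Complex.exp (u * g ω * Complex.I) ∂μ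
      = (∫ ω, Complex.exp (s * f ω * Complex.I) ∂μ)
        * ∫ ω, Complex.exp (u * g ω * Complex.I) ∂μ := by
  have hφ : Continuous fun x : ℝ => Complex.exp (s * x * Complex.I) := by
    continuity
  have hψ : Continuous fun x : ℝ => Complex.exp (u * x * Complex.I) := by
    continuity
  haveI : IsProbabilityMeasure (μ.map f) := Measure.isProbabilityMeasure_map hf
  haveI : IsProbabilityMeasure (μ.map g) := Measure.isProbabilityMeasure_map hg
  have hmap := (indepFun_iff_map_prod_eq_prod_map_map hf hg).mp h
  calc
    ∫ ω, Complex.exp (s * f ω * Complex.I) * Complex.exp (u * g ω * Complex.I) ∂μ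
        = ∫ p : ℝ × ℝ, Complex.exp (s * p.1 * Complex.I) * Complex.exp (u * p.2 * Complex.I)
            ∂(μ.map fun ω => (f ω, g ω)) := by
          rw [integral_map (hf.prodMk hg)]
          exact (((hφ.comp continuous_fst).mul (hψ.comp continuous_snd)).aestronglyMeasurable)
    _ = ∫ p : ℝ × ℝ, Complex.exp (s * p.1 * Complex.I) * Complex.exp (u * p.2 * Complex.I)
            ∂((μ.map f).prod (μ.map g)) := by rw [hmap]
    _ = (∫ x, Complex.exp (s * x * Complex.I) ∂(μ.map f))
          * ∫ y, Complex.exp (u * y * Complex.I) ∂(μ.map g) :=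
        integral_prod_mul (fun x : ℝ => Complex.exp (s * x * Complex.I))
          (fun y : ℝ => Complex.exp (u * y * Complex.I))
    _ = (∫ ω, Complex.exp (s * f ω * Complex.I) ∂μ)
          * ∫ ω, Complex.exp (u * g ω * Complex.I) ∂μ := by
        rw [integral_map hf hφ.aestronglyMeasurable, integral_map hg hψ.aestronglyMeasurable]

lemma div_cancel_aux (x b c : ℂ) (hc : c ≠ 0) : x * c / (b * c) = x / b := by
  rw [mul_comm b c, ← div_div, mul_div_assoc, div_self hc, mul_one]

/-- For `W = X + U` and `Y = β₀ + β₁ X + ε` with `X, U, ε` mutually independent, `U` and `ε`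
symmetric about `0` with strictly positive characteristic functions, the phase functions satisfy
`ρ_Y(t) = exp(itβ₀) ρ_X(β₁ t) = exp(itβ₀) ρ_W(β₁ t)`. -/
theorem phase_relation_linear_eiv {Ω : Type*} [MeasurableSpace Ω]
    (μ : Measure Ω) [IsProbabilityMeasure μ] (X U ε : Ω → ℝ) (β₀ β₁ : ℝ)
    (hX : AEMeasurable X μ) (hU : AEMeasurable U μ) (hε : AEMeasurable ε μ)
    (hindep : iIndepFun ![X, U, ε] μ)
    (hUsymm : Measure.map U μ = Measure.map (fun ω => -U ω) μ)
    (hεsymm : Measure.map ε μ = Measure.map (fun ω => -ε ω) μ)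
    (hUcf : ∀ t : ℝ, (charFn μ U t).im = 0 ∧ 0 < (charFn μ U t).re)
    (hεcf : ∀ t : ℝ, (charFn μ ε t).im = 0 ∧ 0 < (charFn μ ε t).re) :
    ∀ t : ℝ, charFn μ X (β₁ * t) ≠ 0 →
      phaseFn μ (fun ω => β₀ + β₁ * X ω + ε ω) t
          = Complex.exp (t * β₀ * Complex.I) * phaseFn μ X (β₁ * t)
        ∧ phaseFn μ (fun ω => β₀ + β₁ * X ω + ε ω) t
          = Complex.exp (t * β₀ * Complex.I) * phaseFn μ (fun ω => X ω + U ω) (β₁ * t) := by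
  intro t ha
  have hXε : IndepFun X ε μ := by
    have := hindep.indepFun (i := 0) (j := 2) (by decide)
    simpa using this
  have hXU : IndepFun X U μ := by
    have := hindep.indepFun (i := 0) (j := 1) (by decide)
    simpa using this
  set a := charFn μ X (β₁ * t) with ha_def
  -- charFn of Y
  have hY : charFn μ (fun ω => β₀ + β₁ * X ω + ε ω) t
      = Complex.exp (t * β₀ * Complex.I) * (a * charFn μ ε t) := by
    have key : ∀ ω, Complex.exp ((t : ℂ) * (β₀ + β₁ * X ω + ε ω : ℝ) * Complex.I)
        = Complex.exp ((t : ℂ) * β₀ * Complex.I)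
          * (Complex.exp (((β₁ * t : ℝ) : ℂ) * (X ω : ℝ) * Complex.I)
            * Complex.exp ((t : ℂ) * (ε ω : ℝ) * Complex.I)) := by
      intro ω
      rw [← Complex.exp_add, ← Complex.exp_add]
      push_cast
      ring_nf
    simp only [charFn, key]
    rw [integral_const_mul, indep_integral_exp μ X ε hX hε hXε (β₁ * t) t]
    rfl
  -- charFn of W
  have hW : charFn μ (fun ω => X ω + U ω) (β₁ * t) = a * charFn μ U (β₁ * t) := by
    have key : ∀ ω, Complex.exp (((β₁ * t : ℝ) : ℂ) * (X ω + U ω : ℝ) * Complex.I)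
        = Complex.exp (((β₁ * t : ℝ) : ℂ) * (X ω : ℝ) * Complex.I)
          * Complex.exp (((β₁ * t : ℝ) : ℂ) * (U ω : ℝ) * Complex.I) := by
      intro ω
      rw [← Complex.exp_add]
      push_cast
      ring_nf
    simp only [charFn, key]
    exact indep_integral_exp μ X U hX hU hXU (β₁ * t) (β₁ * t)
  obtain ⟨hεim, hεre⟩ := hεcf t
  obtain ⟨hUim, hUre⟩ := hUcf (β₁ * t)
  have hεeq : charFn μ ε t = ((charFn μ ε t).re : ℂ) := by
    rw [Complex.ext_iff]; simp [hεim]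
  have hUeq : charFn μ U (β₁ * t) = ((charFn μ U (β₁ * t)).re : ℂ) := by
    rw [Complex.ext_iff]; simp [hUim]
  have habs_exp : ‖Complex.exp ((t : ℂ) * β₀ * Complex.I)‖ = 1 := by
    rw [Complex.norm_exp]
    simp
  have h1 : phaseFn μ (fun ω => β₀ + β₁ * X ω + ε ω) t
      = Complex.exp (t * β₀ * Complex.I) * phaseFn μ X (β₁ * t) := by
    rw [phaseFn, phaseFn, hY, ← ha_def]
    rw [norm_mul, norm_mul, habs_exp, one_mul]
    rw [hεeq, Complex.norm_real, Real.norm_eq_abs, abs_of_pos hεre]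
    have hne : ((charFn μ ε t).re : ℂ) ≠ 0 := by
      exact_mod_cast hεre.ne'
    rw [← mul_assoc, Complex.ofReal_mul, div_cancel_aux _ _ _ hne, mul_div_assoc]
  refine ⟨h1, ?_⟩
  rw [h1]
  congr 1
  rw [phaseFn, phaseFn, hW, ← ha_def]
  rw [norm_mul]
  rw [hUeq, Complex.norm_real, Real.norm_eq_abs, abs_of_pos hUre]
  have hne : ((charFn μ U (β₁ * t)).re : ℂ) ≠ 0 := by
    exact_mod_cast hUre.ne'
  rw [Complex.ofReal_mul, div_cancel_aux _ _ _ hne]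
end

section
/- Let W = X + U and Y = β₀ + β₁X + ε with X, U, ε mutually independent and integrable to third order, with U and ε symmetric about 0 (so all their odd moments up to order 3 vanish). Then the third cumulants satisfy κ₃^Y = β₁³ κ₃^W, where κ₃ denotes the third central moment. -/
open MeasureTheory ProbabilityTheory

/-- The third central moment (third cumulant) of a real random variable. -/
noncomputable def thirdCumulant {Ω : Type*} [MeasurableSpace Ω] (μ : Measure Ω) (Z : Ω → ℝ) : ℝ :=
  ∫ ω, (Z ω - ∫ ω', Z ω' ∂μ) ^ 3 ∂μ

section Aux

variable {Ω : Type*} [MeasurableSpace Ω] {μ : Measure Ω} [IsProbabilityMeasure μ]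

lemma memLp3_integrable {Z : Ω → ℝ} (hZ : MemLp Z 3 μ) : Integrable Z μ :=
  hZ.integrable (by norm_num)

lemma memLp3_integrable_sq {Z : Ω → ℝ} (hZ : MemLp Z 3 μ) :
    Integrable (fun ω => Z ω ^ 2) μ :=
  (hZ.mono_exponent (by norm_num)).integrable_sq

lemma memLp3_integrable_cube {Z : Ω → ℝ} (hZ : MemLp Z 3 μ) :
    Integrable (fun ω => Z ω ^ 3) μ := by
  have h := hZ.integrable_norm_rpow (by norm_num) (by norm_num)
  refine h.mono' ?_ ?_
  · exact (hZ.aestronglyMeasurable.aemeasurable.pow_const 3).aestronglyMeasurable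
  · filter_upwards with ω
    have h3 : ((3 : ENNReal).toReal) = (3 : ℝ) := by norm_num
    have h4 : ‖Z ω‖ ^ (3 : ℝ) = |Z ω| ^ (3 : ℕ) := by
      rw [Real.norm_eq_abs, ← Real.rpow_natCast]; norm_num
    rw [h3, h4, Real.norm_eq_abs, abs_pow]

lemma integral_pow_eq_zero_of_symm {Z : Ω → ℝ} (hZ : AEMeasurable Z μ)
    (hsymm : Measure.map Z μ = Measure.map (fun ω => -Z ω) μ) {n : ℕ} (hn : Odd n) :
    ∫ ω, Z ω ^ n ∂μ = 0 := by
  have hmeas : AEStronglyMeasurable (fun x : ℝ => x ^ n) (Measure.map Z μ) :=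
    (measurable_id.pow_const n).aestronglyMeasurable
  have h1 : ∫ ω, Z ω ^ n ∂μ = ∫ x, x ^ n ∂(Measure.map Z μ) :=
    (integral_map hZ hmeas).symm
  have h2 : ∫ x, x ^ n ∂(Measure.map (fun ω => -Z ω) μ) = ∫ ω, (-Z ω) ^ n ∂μ :=
    integral_map hZ.neg (hsymm ▸ hmeas)
  have h3 : ∫ ω, (-Z ω) ^ n ∂μ = - ∫ ω, Z ω ^ n ∂μ := by
    simp_rw [hn.neg_pow]
    exact integral_neg _
  have key : ∫ ω, Z ω ^ n ∂μ = - ∫ ω, Z ω ^ n ∂μ := by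
    calc ∫ ω, Z ω ^ n ∂μ = ∫ x, x ^ n ∂(Measure.map Z μ) := h1
      _ = ∫ x, x ^ n ∂(Measure.map (fun ω => -Z ω) μ) := by rw [hsymm]
      _ = ∫ ω, (-Z ω) ^ n ∂μ := h2
      _ = - ∫ ω, Z ω ^ n ∂μ := h3
  linarith

lemma thirdCumulant_eq_zero_of_symm {Z : Ω → ℝ} (hZ : MemLp Z 3 μ)
    (hsymm : Measure.map Z μ = Measure.map (fun ω => -Z ω) μ) :
    thirdCumulant μ Z = 0 := by
  have hmean : ∫ ω, Z ω ∂μ = 0 := by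
    have := integral_pow_eq_zero_of_symm hZ.aestronglyMeasurable.aemeasurable hsymm
      (n := 1) ⟨0, by norm_num⟩
    simpa using this
  have hcube : ∫ ω, Z ω ^ 3 ∂μ = 0 :=
    integral_pow_eq_zero_of_symm hZ.aestronglyMeasurable.aemeasurable hsymm
      (n := 3) ⟨1, by norm_num⟩
  simp [thirdCumulant, hmean, hcube]

lemma thirdCumulant_affine {Z : Ω → ℝ} (hZ : Integrable Z μ) (a b : ℝ) :
    thirdCumulant μ (fun ω => a + b * Z ω) = b ^ 3 * thirdCumulant μ Z := by
  have hmean : ∫ ω, (a + b * Z ω) ∂μ = a + b * ∫ ω, Z ω ∂μ := by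
    rw [integral_add (integrable_const a) (hZ.const_mul b), integral_const,
      integral_const_mul]
    simp
  unfold thirdCumulant
  rw [hmean]
  have : ∀ ω, (a + b * Z ω - (a + b * ∫ ω', Z ω' ∂μ)) ^ 3
      = b ^ 3 * (Z ω - ∫ ω', Z ω' ∂μ) ^ 3 := by
    intro ω; ring
  simp_rw [this]
  exact integral_const_mul _ _

lemma thirdCumulant_add_of_indep {Xf Zf : Ω → ℝ} (h : IndepFun Xf Zf μ)
    (hX : MemLp Xf 3 μ) (hZ : MemLp Zf 3 μ) :
    thirdCumulant μ (fun ω => Xf ω + Zf ω)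
      = thirdCumulant μ Xf + thirdCumulant μ Zf := by
  set mx := ∫ ω, Xf ω ∂μ with hmx
  set mz := ∫ ω, Zf ω ∂μ with hmz
  set X' := fun ω => Xf ω - mx with hX'def
  set Z' := fun ω => Zf ω - mz with hZ'def
  have hX'3 : MemLp X' 3 μ := hX.sub (memLp_const mx)
  have hZ'3 : MemLp Z' 3 μ := hZ.sub (memLp_const mz)
  have hX'int : Integrable X' μ := memLp3_integrable hX'3
  have hZ'int : Integrable Z' μ := memLp3_integrable hZ'3
  have hX'sq : Integrable (fun ω => X' ω ^ 2) μ := memLp3_integrable_sq hX'3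
  have hZ'sq : Integrable (fun ω => Z' ω ^ 2) μ := memLp3_integrable_sq hZ'3
  have hX'cube : Integrable (fun ω => X' ω ^ 3) μ := memLp3_integrable_cube hX'3
  have hZ'cube : Integrable (fun ω => Z' ω ^ 3) μ := memLp3_integrable_cube hZ'3
  have h' : IndepFun X' Z' μ :=
    h.comp (measurable_id.sub_const mx) (measurable_id.sub_const mz)
  have hX'mean : ∫ ω, X' ω ∂μ = 0 := by
    simp [hX'def, integral_sub (memLp3_integrable hX) (integrable_const (∫ ω, Xf ω ∂μ)), hmx]
  have hZ'mean : ∫ ω, Z' ω ∂μ = 0 := by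
    simp [hZ'def, integral_sub (memLp3_integrable hZ) (integrable_const (∫ ω, Zf ω ∂μ)), hmz]
  -- independence of powers
  have h21 : IndepFun (fun ω => X' ω ^ 2) Z' μ :=
    h'.comp (measurable_id.pow_const 2) measurable_id
  have h12 : IndepFun X' (fun ω => Z' ω ^ 2) μ :=
    h'.comp measurable_id (measurable_id.pow_const 2)
  have hint21 : Integrable (fun ω => X' ω ^ 2 * Z' ω) μ := h21.integrable_mul hX'sq hZ'int
  have hint12 : Integrable (fun ω => X' ω * Z' ω ^ 2) μ := h12.integrable_mul hX'int hZ'sq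
  have hmul21 : ∫ ω, X' ω ^ 2 * Z' ω ∂μ = (∫ ω, X' ω ^ 2 ∂μ) * ∫ ω, Z' ω ∂μ :=
    h21.integral_mul_eq_mul_integral hX'sq.aestronglyMeasurable hZ'int.aestronglyMeasurable
  have hmul12 : ∫ ω, X' ω * Z' ω ^ 2 ∂μ = (∫ ω, X' ω ∂μ) * ∫ ω, Z' ω ^ 2 ∂μ :=
    h12.integral_mul_eq_mul_integral hX'int.aestronglyMeasurable hZ'sq.aestronglyMeasurable
  have hmeansum : ∫ ω, (Xf ω + Zf ω) ∂μ = mx + mz :=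
    integral_add (memLp3_integrable hX) (memLp3_integrable hZ)
  unfold thirdCumulant
  rw [hmeansum]
  have hexp : ∀ ω, (Xf ω + Zf ω - (mx + mz)) ^ 3
      = X' ω ^ 3 + (3 * (X' ω ^ 2 * Z' ω) + (3 * (X' ω * Z' ω ^ 2) + Z' ω ^ 3)) := by
    intro ω; simp only [hX'def, hZ'def]; ring
  simp_rw [hexp]
  have i3 : Integrable (fun ω => 3 * (X' ω * Z' ω ^ 2) + Z' ω ^ 3) μ := by
    exact (hint12.const_mul 3).add hZ'cube
  have i2 : Integrable (fun ω => 3 * (X' ω ^ 2 * Z' ω)) μ := hint21.const_mul 3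
  have i2' : Integrable (fun ω => 3 * (X' ω * Z' ω ^ 2)) μ := hint12.const_mul 3
  have i1 : Integrable (fun ω => 3 * (X' ω ^ 2 * Z' ω) + (3 * (X' ω * Z' ω ^ 2) + Z' ω ^ 3)) μ := by
    exact i2.add i3
  rw [integral_add hX'cube i1, integral_add i2 i3, integral_add i2' hZ'cube,
    integral_const_mul, integral_const_mul, hmul21, hmul12, hX'mean, hZ'mean]
  simp [hX'def, hZ'def, hmx, hmz]

end Aux

/-- For `W = X + U`, `Y = β₀ + β₁X + ε` with mutually independent `X, U, ε` having finite
third moments, and `U, ε` symmetric about `0`, the third cumulants satisfy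
`κ₃^Y = β₁³ κ₃^W`. -/
theorem third_cumulant_relation {Ω : Type*} [MeasurableSpace Ω]
    (μ : Measure Ω) [IsProbabilityMeasure μ] (X U ε : Ω → ℝ) (β₀ β₁ : ℝ)
    (hX3 : MemLp X 3 μ) (hU3 : MemLp U 3 μ) (hε3 : MemLp ε 3 μ)
    (hindep : iIndepFun ![X, U, ε] μ)
    (hUsymm : Measure.map U μ = Measure.map (fun ω => -U ω) μ)
    (hεsymm : Measure.map ε μ = Measure.map (fun ω => -ε ω) μ) :
    thirdCumulant μ (fun ω => β₀ + β₁ * X ω + ε ω)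
      = β₁ ^ 3 * thirdCumulant μ (fun ω => X ω + U ω) := by
  have hXU : IndepFun X U μ := by
    have := hindep.indepFun (i := 0) (j := 1) (by decide)
    simpa using this
  have hXε : IndepFun X ε μ := by
    have := hindep.indepFun (i := 0) (j := 2) (by decide)
    simpa using this
  have hA3 : MemLp (fun ω => β₀ + β₁ * X ω) 3 μ :=
    (memLp_const β₀).add (hX3.const_mul β₁)
  have hAε : IndepFun (fun ω => β₀ + β₁ * X ω) ε μ :=
    hXε.comp ((measurable_id.const_mul β₁).const_add β₀) measurable_id
  have hY : thirdCumulant μ (fun ω => β₀ + β₁ * X ω + ε ω)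
      = thirdCumulant μ (fun ω => β₀ + β₁ * X ω) + thirdCumulant μ ε :=
    thirdCumulant_add_of_indep hAε hA3 hε3
  have hW : thirdCumulant μ (fun ω => X ω + U ω)
      = thirdCumulant μ X + thirdCumulant μ U :=
    thirdCumulant_add_of_indep hXU hX3 hU3
  rw [hY, hW, thirdCumulant_eq_zero_of_symm hU3 hUsymm,
    thirdCumulant_eq_zero_of_symm hε3 hεsymm,
    thirdCumulant_affine (memLp3_integrable hX3) β₀ β₁]
  ring
end

section
/- Let X, U be independent with U symmetric about 0 and φ_U strictly positive, and suppose the distribution of X is not symmetric about any point. If X', U' is another such pair with X + U equal in distribution to X' + U' and U' symmetric with strictly positive characteristic function, then X and X' have the same phase function: φ_X(t)/|φ_X(t)| = φ_{X'}(t)/|φ_{X'}(t)| wherever both characteristic functions are nonzero. -/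
open MeasureTheory ProbabilityTheory Complex

lemma charFn_eq_cos_sin {Ω : Type*} [MeasurableSpace Ω] (μ : Measure Ω)
    [IsProbabilityMeasure μ] (X : Ω → ℝ) (hX : AEMeasurable X μ) (t : ℝ) :
    charFn μ X t = ((∫ ω, Real.cos (t * X ω) ∂μ : ℝ) : ℂ)
      + ((∫ ω, Real.sin (t * X ω) ∂μ : ℝ) : ℂ) * Complex.I := by
  have hmeas : AEMeasurable (fun ω => t * X ω) μ := hX.const_mul t
  have hcosi : Integrable (fun ω => Real.cos (t * X ω)) μ := by
    refine (integrable_const (1:ℝ)).mono'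
      (Real.measurable_cos.comp_aemeasurable hmeas).aestronglyMeasurable ?_
    filter_upwards with ω
    simpa using Real.abs_cos_le_one _
  have hsini : Integrable (fun ω => Real.sin (t * X ω)) μ := by
    refine (integrable_const (1:ℝ)).mono'
      (Real.measurable_sin.comp_aemeasurable hmeas).aestronglyMeasurable ?_
    filter_upwards with ω
    simpa using Real.abs_sin_le_one _
  have h1 : ∀ ω, Complex.exp (t * X ω * Complex.I)
      = ((Real.cos (t * X ω) : ℝ) : ℂ) + ((Real.sin (t * X ω) : ℝ) : ℂ) * Complex.I := by
    intro ω
    rw [show ((t : ℂ) * (X ω : ℂ)) = ((t * X ω : ℝ) : ℂ) by push_cast; ring,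
      Complex.exp_mul_I, Complex.ofReal_cos, Complex.ofReal_sin]
  unfold charFn
  simp_rw [h1]
  have hsmul : ∀ ω, ((Real.sin (t * X ω) : ℝ) : ℂ) * Complex.I
      = (Real.sin (t * X ω)) • Complex.I := by
    intro ω; simp [Complex.real_smul]
  simp_rw [hsmul]
  have h2 := integral_add (μ := μ) hcosi.ofReal (hsini.smul_const Complex.I)
  refine h2.trans ?_
  rw [integral_smul_const]
  simp only [Complex.real_smul]
  norm_cast

lemma charFn_add_of_indep {Ω : Type*} [MeasurableSpace Ω] (μ : Measure Ω)
    [IsProbabilityMeasure μ] (X U : Ω → ℝ) (hX : AEMeasurable X μ) (hU : AEMeasurable U μ)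
    (hindep : IndepFun X U μ) (t : ℝ) :
    charFn μ (fun ω => X ω + U ω) t = charFn μ X t * charFn μ U t := by
  have hXU : AEMeasurable (fun ω => X ω + U ω) μ := hX.add hU
  rw [charFn_eq_cos_sin μ _ hXU t, charFn_eq_cos_sin μ X hX t, charFn_eq_cos_sin μ U hU t]
  set a : Ω → ℝ := fun ω => Real.cos (t * X ω) with ha_def
  set b : Ω → ℝ := fun ω => Real.sin (t * X ω) with hb_def
  set c : Ω → ℝ := fun ω => Real.cos (t * U ω) with hc_def
  set d : Ω → ℝ := fun ω => Real.sin (t * U ω) with hd_def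
  have bdd : ∀ (g : Ω → ℝ), AEMeasurable g μ → (∀ ω, |g ω| ≤ 1) → Integrable g μ := by
    intro g hg hb
    exact (integrable_const (1:ℝ)).mono' hg.aestronglyMeasurable
      (ae_of_all _ (by simpa using hb))
  have hXm : AEMeasurable (fun ω => t * X ω) μ := hX.const_mul t
  have hUm : AEMeasurable (fun ω => t * U ω) μ := hU.const_mul t
  have hma : AEMeasurable a μ := Real.measurable_cos.comp_aemeasurable hXm
  have hmb : AEMeasurable b μ := Real.measurable_sin.comp_aemeasurable hXm
  have hmc : AEMeasurable c μ := Real.measurable_cos.comp_aemeasurable hUm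
  have hmd : AEMeasurable d μ := Real.measurable_sin.comp_aemeasurable hUm
  have hia : Integrable a μ := bdd a hma fun ω => Real.abs_cos_le_one _
  have hib : Integrable b μ := bdd b hmb fun ω => Real.abs_sin_le_one _
  have hic : Integrable c μ := bdd c hmc fun ω => Real.abs_cos_le_one _
  have hid : Integrable d μ := bdd d hmd fun ω => Real.abs_sin_le_one _
  have hmcos : Measurable fun x : ℝ => Real.cos (t * x) :=
    Real.measurable_cos.comp (measurable_const_mul t)
  have hmsin : Measurable fun x : ℝ => Real.sin (t * x) :=
    Real.measurable_sin.comp (measurable_const_mul t)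
  have hac : IndepFun a c μ := hindep.comp hmcos hmcos
  have hbd : IndepFun b d μ := hindep.comp hmsin hmsin
  have had : IndepFun a d μ := hindep.comp hmcos hmsin
  have hbc : IndepFun b c μ := hindep.comp hmsin hmcos
  have hcos_add : (fun ω => Real.cos (t * (X ω + U ω)))
      = fun ω => a ω * c ω - b ω * d ω := by
    funext ω; simp only [ha_def, hb_def, hc_def, hd_def, mul_add, Real.cos_add]
  have hsin_add : (fun ω => Real.sin (t * (X ω + U ω)))
      = fun ω => b ω * c ω + a ω * d ω := by
    funext ω
    simp only [ha_def, hb_def, hc_def, hd_def, mul_add, Real.sin_add]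
  have h1 : ∫ ω, Real.cos (t * (X ω + U ω)) ∂μ
      = (∫ ω, a ω ∂μ) * (∫ ω, c ω ∂μ) - (∫ ω, b ω ∂μ) * (∫ ω, d ω ∂μ) := by
    have i1 : Integrable (fun ω => a ω * c ω) μ := hac.integrable_mul hia hic
    have i2 : Integrable (fun ω => b ω * d ω) μ := hbd.integrable_mul hib hid
    rw [hcos_add, integral_sub i1 i2, hac.integral_fun_mul_eq_mul_integral hia.1 hic.1,
      hbd.integral_fun_mul_eq_mul_integral hib.1 hid.1]
  have h2 : ∫ ω, Real.sin (t * (X ω + U ω)) ∂μ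
      = (∫ ω, b ω ∂μ) * (∫ ω, c ω ∂μ) + (∫ ω, a ω ∂μ) * (∫ ω, d ω ∂μ) := by
    have i1 : Integrable (fun ω => b ω * c ω) μ := hbc.integrable_mul hib hic
    have i2 : Integrable (fun ω => a ω * d ω) μ := had.integrable_mul hia hid
    rw [hsin_add, integral_add i1 i2, hbc.integral_fun_mul_eq_mul_integral hib.1 hic.1,
      had.integral_fun_mul_eq_mul_integral hia.1 hid.1]
  rw [h1, h2]
  have hI : (Complex.I) * Complex.I = -1 := Complex.I_mul_I
  push_cast
  ring_nf
  rw [Complex.I_sq]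
  ring

lemma charFn_map_eq {Ω : Type*} [MeasurableSpace Ω] (μ : Measure Ω) (X : Ω → ℝ)
    (hX : AEMeasurable X μ) (t : ℝ) :
    charFn μ X t = ∫ x : ℝ, Complex.exp (t * x * Complex.I) ∂(Measure.map X μ) := by
  unfold charFn
  rw [integral_map hX]
  exact (Complex.continuous_exp.comp (by continuity)).aestronglyMeasurable

/-- Identifiability of the phase function: if `X + U =ᵈ X' + U'` where `U, U'` are symmetric
about 0 with strictly positive characteristic functions, `X, U` and `X', U'` are independent
pairs, and `X` is not symmetric about any point, then `X` and `X'` have the same phase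
function wherever both characteristic functions are nonzero. -/
theorem phase_identifiability {Ω Ω' : Type*} [MeasurableSpace Ω] [MeasurableSpace Ω']
    (μ : Measure Ω) (μ' : Measure Ω') [IsProbabilityMeasure μ] [IsProbabilityMeasure μ']
    (X U : Ω → ℝ) (X' U' : Ω' → ℝ)
    (hX : AEMeasurable X μ) (hU : AEMeasurable U μ)
    (hX' : AEMeasurable X' μ') (hU' : AEMeasurable U' μ')
    (hindep : IndepFun X U μ) (hindep' : IndepFun X' U' μ')
    (hUsymm : Measure.map U μ = Measure.map (fun ω => -U ω) μ)
    (hU'symm : Measure.map U' μ' = Measure.map (fun ω => -U' ω) μ')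
    (hUcf : ∀ t : ℝ, (charFn μ U t).im = 0 ∧ 0 < (charFn μ U t).re)
    (hU'cf : ∀ t : ℝ, (charFn μ' U' t).im = 0 ∧ 0 < (charFn μ' U' t).re)
    (hXasymm : ¬ ∃ c : ℝ, Measure.map X μ = Measure.map (fun ω => 2 * c - X ω) μ)
    (heq : Measure.map (fun ω => X ω + U ω) μ = Measure.map (fun ω => X' ω + U' ω) μ') :
    ∀ t : ℝ, charFn μ X t ≠ 0 → charFn μ' X' t ≠ 0 →
      charFn μ X t / (‖charFn μ X t‖ : ℂ)
        = charFn μ' X' t / (‖charFn μ' X' t‖ : ℂ) := by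
  intro t hφ hφ'
  have key : charFn μ X t * charFn μ U t = charFn μ' X' t * charFn μ' U' t := by
    rw [← charFn_add_of_indep μ X U hX hU hindep t,
      ← charFn_add_of_indep μ' X' U' hX' hU' hindep' t,
      charFn_map_eq μ (fun ω => X ω + U ω) (hX.add hU) t, charFn_map_eq μ' (fun ω => X' ω + U' ω) (hX'.add hU') t, heq]
  set r : ℝ := (charFn μ U t).re with hr_def
  set r' : ℝ := (charFn μ' U' t).re with hr'_def
  have hr : 0 < r := (hUcf t).2
  have hr' : 0 < r' := (hU'cf t).2
  have hUr : charFn μ U t = (r : ℂ) := by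
    apply Complex.ext <;> simp [hr_def, (hUcf t).1]
  have hU'r : charFn μ' U' t = (r' : ℂ) := by
    apply Complex.ext <;> simp [hr'_def, (hU'cf t).1]
  rw [hUr, hU'r] at key
  have habs : (‖charFn μ X t‖) * r = (‖charFn μ' X' t‖) * r' := by
    have := congrArg (‖·‖) key
    simpa [norm_mul, Complex.norm_real, Real.norm_eq_abs, abs_of_pos hr, abs_of_pos hr'] using this
  have hrne : (r : ℂ) ≠ 0 := by exact_mod_cast hr.ne'
  have hr'ne : (r' : ℂ) ≠ 0 := by exact_mod_cast hr'.ne'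
  calc charFn μ X t / (‖charFn μ X t‖ : ℂ)
      = (charFn μ X t * r) / ((‖charFn μ X t‖ : ℂ) * r) := by
        rw [mul_div_mul_right _ _ hrne]
    _ = (charFn μ' X' t * r') / ((‖charFn μ' X' t‖ : ℂ) * r') := by
        rw [key]
        congr 1
        push_cast
        exact_mod_cast congrArg (Complex.ofReal) habs
    _ = charFn μ' X' t / (‖charFn μ' X' t‖ : ℂ) := by
        rw [mul_div_mul_right _ _ hr'ne]
end
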